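/- Let T be the subgroup of the symmetric group on {0,...,11} generated by a = (0,7,11)(1,5,6)(2,9,10)(3,4,8) and b = (0,4,2)(1,5,9)(3,7,11)(6,10,8), let c = (ab)^{-1}, and let V be the subgroup { id, (1,7)(4,10), (0,6)(3,9), (0,6)(1,7)(3,9)(4,10), (0,3,6,9)(1,10)(2,8)(4,7), (0,3,6,9)(1,4)(2,8)(7,10), (0,9,6,3)(1,10)(2,8)(4,7), (0,9,6,3)(1,4)(2,8)(7,10) }. Then for every r with 1 ≤ r ≤ 2 no element of V is conjugate in T to a^r or to b^r, and for every r with 1 ≤ r ≤ 5 no element of V is conjugate in T to c^r. -/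

import Mathlib

/-- `a = (0,7,11)(1,5,6)(2,9,10)(3,4,8)` as a permutation of `{0,…,11}`. -/
def a : Equiv.Perm (Fin 12) := c[0, 7, 11] * c[1, 5, 6] * c[2, 9, 10] * c[3, 4, 8]

/-- `b = (0,4,2)(1,5,9)(3,7,11)(6,10,8)` as a permutation of `{0,…,11}`. -/
def b : Equiv.Perm (Fin 12) := c[0, 4, 2] * c[1, 5, 9] * c[3, 7, 11] * c[6, 10, 8]

/-- `T` is the subgroup of the symmetric group on 12 letters generated by `a` and `b`. -/
def T : Subgroup (Equiv.Perm (Fin 12)) := Subgroup.closure {a, b}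

/-- The set `V` of eight permutations. -/
def Vset : Set (Equiv.Perm (Fin 12)) :=
  {1, c[1,7] * c[4,10], c[0,6] * c[3,9], c[0,6] * c[1,7] * c[3,9] * c[4,10],
   c[0,3,6,9] * c[1,10] * c[2,8] * c[4,7], c[0,3,6,9] * c[1,4] * c[2,8] * c[7,10],
   c[0,9,6,3] * c[1,10] * c[2,8] * c[4,7], c[0,9,6,3] * c[1,4] * c[2,8] * c[7,10]}

/-- `c = (ab)⁻¹`. -/
def cp : Equiv.Perm (Fin 12) := (a * b)⁻¹


lemma no_conj {g v : Equiv.Perm (Fin 12)} (h : g.support.card ≠ v.support.card) :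
    ¬ ∃ t ∈ T, t * g * t⁻¹ = v := by
  rintro ⟨t, -, rfl⟩
  exact h Equiv.Perm.card_support_conj.symm

/-- No element of `V` is conjugate in `T` to `aʳ` or `bʳ` for `1 ≤ r ≤ 2`, nor to
`cʳ` for `1 ≤ r ≤ 5`, where `c = (ab)⁻¹`. -/
theorem stmt_7 :
    (∀ r : ℕ, 1 ≤ r → r ≤ 2 → ∀ v ∈ Vset,
      (¬ ∃ t ∈ T, t * a ^ r * t⁻¹ = v) ∧ (¬ ∃ t ∈ T, t * b ^ r * t⁻¹ = v)) ∧
    (∀ r : ℕ, 1 ≤ r → r ≤ 5 → ∀ v ∈ Vset, ¬ ∃ t ∈ T, t * cp ^ r * t⁻¹ = v) := by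
  constructor
  · intro r h1 h2 v hv
    interval_cases r <;>
      rcases hv with rfl | rfl | rfl | rfl | rfl | rfl | rfl | rfl <;>
      exact ⟨no_conj (by decide), no_conj (by decide)⟩
  · intro r h1 h2 v hv
    interval_cases r <;>
      rcases hv with rfl | rfl | rfl | rfl | rfl | rfl | rfl | rfl <;>
      set_option maxRecDepth 100000 in exact no_conj (by decide)
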